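/- For all r ≥ 0, ρ > 0 and a, s ∈ ℝ: z(a,s,r,ρ) + a = 0 if and only if a ≤ 0, s ≥ 0 and s·a = −r. -/
import Mathlib


/-- `z(a,s,r,ρ)` from the smoothing barrier augmented Lagrangian method. -/
noncomputable def zfun (a s r ρ : ℝ) : ℝ :=
  (1 / 2) * (Real.sqrt ((ρ * s + a) ^ 2 + 4 * r * ρ) - (ρ * s + a))

/-- `κ(a,s,r,ρ)` from the smoothing barrier augmented Lagrangian method. -/
noncomputable def kfun (a s r ρ : ℝ) : ℝ :=
  (1 / 2) * (Real.sqrt ((ρ * s + a) ^ 2 + 4 * r * ρ) + (ρ * s + a))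

/-- for all `r ≥ 0`, `ρ > 0` and `a s : ℝ`,
`z(a,s,r,ρ) + a = 0` if and only if `a ≤ 0`, `s ≥ 0` and `s·a = −r`. -/
theorem z_plus_a_eq_zero_iff (r ρ a s : ℝ) (hr : 0 ≤ r) (hρ : 0 < ρ) :
    zfun a s r ρ + a = 0 ↔ a ≤ 0 ∧ 0 ≤ s ∧ s * a = -r := by
  have hkey : zfun a s r ρ + a = 0 ↔
      Real.sqrt ((ρ * s + a) ^ 2 + 4 * r * ρ) = ρ * s - a := by
    unfold zfun; constructor <;> intro h <;> nlinarith [h]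
  rw [hkey]
  constructor
  · intro h
    have hnn : 0 ≤ ρ * s - a := h ▸ Real.sqrt_nonneg _
    have hsq : (ρ * s - a) ^ 2 = (ρ * s + a) ^ 2 + 4 * r * ρ := by
      rw [← h, Real.sq_sqrt (by positivity)]
    have hsa : s * a = -r := by nlinarith
    have ha : a ≤ 0 := by nlinarith [mul_self_nonneg (ρ * s), hρ.le]
    refine ⟨ha, ?_, hsa⟩
    by_contra hs
    push_neg at hs
    have ha0 : a = 0 := by nlinarith
    nlinarith
  · rintro ⟨ha, hs, hsa⟩
    have h1 : (ρ * s + a) ^ 2 + 4 * r * ρ = (ρ * s - a) ^ 2 := by nlinarith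
    rw [h1, Real.sqrt_sq (by nlinarith)]
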